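/- Let l1, l2, l3, l4 be integers, each at least 2. Then the sum over all 24 permutations σ of {1,2,3,4} of the products ζ(l_{σ(1)}, l_{σ(2)}, l_{σ(3)})·ζ(l_{σ(4)}) satisfies Σ_{σ ∈ S4} ζ(l_{σ(1)}, l_{σ(2)}, l_{σ(3)})·ζ(l_{σ(4)}) = 4·ζ(l1)ζ(l2)ζ(l3)ζ(l4) − 2·Σ_{{i,j}} ζ(l_i+l_j)·ζ(l_k)·ζ(l_m) + 2·Σ_{{i,j,k}} ζ(l_i+l_j+l_k)·ζ(l_m), where the first sum on the right runs over all six 2-element subsets {i,j} of {1,2,3,4} (with {k,m} the complementary pair) and the second over the four 3-element subsets {i,j,k} (with m the remaining index). (Equation (4) of the paper's depth-4 lemma in Section 4.2, restricted to convergent indices; there the sum is indexed by C4·S3, which equals S4.) -/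

import Mathlib

/-! Auxiliary development for multiple zeta values. -/

noncomputable def zt (k : ℕ) (m : ℕ) : ℝ := 1 / (m : ℝ) ^ k

lemma zt_nonneg (k m : ℕ) : 0 ≤ zt k m := by unfold zt; positivity

lemma zt_zero {k : ℕ} (hk : 1 ≤ k) : zt k 0 = 0 := by
  simp [zt, zero_pow (by omega : k ≠ 0)]

lemma zt_mul (k l m : ℕ) : zt k m * zt l m = zt (k + l) m := by
  simp [zt, pow_add, one_div, mul_inv]; ring

lemma summable_zt {k : ℕ} (hk : 2 ≤ k) : Summable (zt k) :=
  Real.summable_one_div_nat_pow.mpr (by omega)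

open Classical in
/-- The multiple zeta value `ζ(l 0, l 1, …, l (n-1)) =
∑_{m 0 > m 1 > ⋯ > m (n-1) ≥ 1} ∏ i, 1 / (m i) ^ (l i)`. -/
noncomputable def mzv {n : ℕ} (l : Fin n → ℕ) : ℝ :=
  ∑' m : Fin n → ℕ,
    if StrictAnti m ∧ ∀ i, 1 ≤ m i then ∏ i, (1 : ℝ) / (m i : ℝ) ^ (l i) else 0

noncomputable def dbl (a b : ℕ) (p : ℕ × ℕ) : ℝ :=
  if p.2 < p.1 then zt a p.1 * zt b p.2 else 0

noncomputable def trp (a b c : ℕ) (t : ℕ × ℕ × ℕ) : ℝ :=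
  if t.2.2 < t.2.1 ∧ t.2.1 < t.1 then zt a t.1 * zt b t.2.1 * zt c t.2.2 else 0

lemma mzv_one {k : ℕ} (hk : 1 ≤ k) : mzv ![k] = ∑' m : ℕ, zt k m := by
  unfold mzv
  rw [← (Equiv.funUnique (Fin 1) ℕ).symm.tsum_eq]
  refine tsum_congr fun m => ?_
  rcases Nat.eq_zero_or_pos m with h | h
  · subst h
    rw [if_neg (by simp [Equiv.funUnique])]
    rw [zt_zero hk]
  · rw [if_pos]
    · simp [zt, Equiv.funUnique]
    constructor
    · intro i j hij; exact absurd hij (by omega)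
    · intro i; simp [Equiv.funUnique]; omega

def e2 : ℕ × ℕ ≃ (Fin 2 → ℕ) where
  toFun p := ![p.1, p.2]
  invFun m := (m 0, m 1)
  left_inv p := rfl
  right_inv m := by funext i; fin_cases i <;> rfl

lemma e2_apply (p : ℕ × ℕ) : e2 p = ![p.1, p.2] := rfl

def e3 : ℕ × ℕ × ℕ ≃ (Fin 3 → ℕ) where
  toFun t := ![t.1, t.2.1, t.2.2]
  invFun m := (m 0, m 1, m 2)
  left_inv p := rfl
  right_inv m := by funext i; fin_cases i <;> rfl

lemma e3_apply (t : ℕ × ℕ × ℕ) : e3 t = ![t.1, t.2.1, t.2.2] := rfl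

lemma strictAnti_fin2 {m : Fin 2 → ℕ} : StrictAnti m ↔ m 1 < m 0 := by
  constructor
  · intro h; exact h (by norm_num : (0 : Fin 2) < 1)
  · intro h i j hij
    fin_cases i <;> fin_cases j <;> first | exact absurd hij (by decide) | exact h

lemma strictAnti_fin3 {m : Fin 3 → ℕ} : StrictAnti m ↔ m 1 < m 0 ∧ m 2 < m 1 := by
  constructor
  · intro h; exact ⟨h (by norm_num : (0:Fin 3) < 1), h (by decide : (1:Fin 3) < 2)⟩
  · rintro ⟨h1, h2⟩ i j hij
    fin_cases i <;> fin_cases j <;>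
      first | exact absurd hij (by decide) | exact h1 | exact h2 | exact h2.trans h1

lemma mzv_two {a b : ℕ} (ha : 1 ≤ a) (hb : 1 ≤ b) :
    mzv ![a, b] = ∑' p : ℕ × ℕ, dbl a b p := by
  unfold mzv
  rw [← e2.tsum_eq]
  refine (tsum_congr fun p => ?_).symm
  rcases p with ⟨x, y⟩
  rw [e2_apply]; simp only [dbl]
  by_cases hxy : y < x
  · rcases Nat.eq_zero_or_pos y with hy | hy
    · subst hy
      rw [if_pos hxy, if_neg, zt_zero hb, mul_zero]
      rintro ⟨-, hpos⟩
      exact absurd (hpos 1) (by simp)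
    · rw [if_pos hxy, if_pos]
      · simp [zt, Fin.prod_univ_two]; ring
      · refine ⟨strictAnti_fin2.mpr (by simpa using hxy), fun i => ?_⟩
        fin_cases i <;> simp <;> omega
  · rw [if_neg hxy, if_neg]
    rintro ⟨hsa, -⟩
    exact hxy (by simpa using strictAnti_fin2.mp hsa)

lemma mzv_three {a b c : ℕ} (ha : 1 ≤ a) (hb : 1 ≤ b) (hc : 1 ≤ c) :
    mzv ![a, b, c] = ∑' t : ℕ × ℕ × ℕ, trp a b c t := by
  unfold mzv
  rw [← e3.tsum_eq]
  refine (tsum_congr fun t => ?_).symm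
  rcases t with ⟨x, y, z⟩
  rw [e3_apply]; simp only [trp]
  by_cases hxy : z < y ∧ y < x
  · rcases Nat.eq_zero_or_pos z with hz | hz
    · subst hz
      rw [if_pos hxy, if_neg, zt_zero hc, mul_zero]
      rintro ⟨-, hpos⟩
      exact absurd (hpos 2) (by simp)
    · rw [if_pos hxy, if_pos]
      · simp [zt, Fin.prod_univ_three]; ring
      · refine ⟨strictAnti_fin3.mpr (by simpa using ⟨hxy.2, hxy.1⟩), fun i => ?_⟩
        fin_cases i <;> simp <;> omega
  · rw [if_neg hxy, if_neg]
    rintro ⟨hsa, -⟩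
    have := strictAnti_fin3.mp hsa
    simp at this
    exact hxy ⟨this.2, this.1⟩

lemma summable_pair {a b : ℕ} (ha : 2 ≤ a) (hb : 2 ≤ b) :
    Summable (fun p : ℕ × ℕ => zt a p.1 * zt b p.2) :=
  (summable_zt ha).mul_of_nonneg (summable_zt hb) (fun m => zt_nonneg a m)
    (fun m => zt_nonneg b m)

lemma summable_triple {a b c : ℕ} (ha : 2 ≤ a) (hb : 2 ≤ b) (hc : 2 ≤ c) :
    Summable (fun t : ℕ × ℕ × ℕ => zt a t.1 * zt b t.2.1 * zt c t.2.2) := by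
  have := (summable_zt ha).mul_of_nonneg (summable_pair hb hc)
    (fun m => zt_nonneg a m)
    (fun p => mul_nonneg (zt_nonneg b p.1) (zt_nonneg c p.2))
  simpa [mul_assoc] using this

lemma summable_ite {ι : Type*} {f : ι → ℝ} (hf : Summable f) (C : ι → Prop)
    [DecidablePred C] : Summable (fun i => if C i then f i else 0) := by
  have h := hf.indicator {i | C i}
  refine h.congr fun i => ?_
  simp [Set.indicator_apply]

lemma summable_dbl {a b : ℕ} (ha : 2 ≤ a) (hb : 2 ≤ b) : Summable (dbl a b) :=
  summable_ite (summable_pair ha hb) _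

lemma tsum_mul_tsum_pair {a b : ℕ} (ha : 2 ≤ a) (hb : 2 ≤ b) :
    (∑' m, zt a m) * (∑' m, zt b m) = ∑' p : ℕ × ℕ, zt a p.1 * zt b p.2 := by
  refine tsum_mul_tsum_of_summable_norm ?_ ?_ <;>
  · rw [summable_norm_iff]
    first | exact summable_zt ha | exact summable_zt hb

lemma tsum_diag {a b : ℕ} :
    (∑' p : ℕ × ℕ, if p.1 = p.2 then zt a p.1 * zt b p.2 else 0) = ∑' m, zt (a + b) m := by
  rw [← Function.Injective.tsum_eq (g := fun m : ℕ => (m, m))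
    (fun x y h => (Prod.mk.injEq _ _ _ _ ▸ h).1) ?_]
  · exact tsum_congr fun m => by simp [zt_mul]
  · intro p hp
    simp only [Function.mem_support] at hp
    rcases p with ⟨x, y⟩
    by_cases h : x = y
    · exact ⟨x, by simp [h]⟩
    · simp [h] at hp

lemma stuffle11 {a b : ℕ} (ha : 2 ≤ a) (hb : 2 ≤ b) :
    (∑' m, zt a m) * (∑' m, zt b m) =
      (∑' p, dbl a b p) + (∑' p, dbl b a p) + ∑' m, zt (a + b) m := by
  rw [tsum_mul_tsum_pair ha hb]
  have hdecomp : ∀ p : ℕ × ℕ, zt a p.1 * zt b p.2 =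
      dbl a b p + (if p.1 < p.2 then zt a p.1 * zt b p.2 else 0)
        + (if p.1 = p.2 then zt a p.1 * zt b p.2 else 0) := by
    intro p
    unfold dbl
    rcases lt_trichotomy p.1 p.2 with h | h | h
    · rw [if_neg (by omega), if_pos h, if_neg (by omega)]; ring
    · rw [if_neg (by omega), if_neg (by omega), if_pos h]; ring
    · rw [if_pos h, if_neg (by omega), if_neg (by omega)]; ring
  calc ∑' p : ℕ × ℕ, zt a p.1 * zt b p.2
      = ∑' p : ℕ × ℕ, (dbl a b p + (if p.1 < p.2 then zt a p.1 * zt b p.2 else 0)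
          + (if p.1 = p.2 then zt a p.1 * zt b p.2 else 0)) := tsum_congr hdecomp
    _ = (∑' p, dbl a b p) + (∑' p : ℕ × ℕ, if p.1 < p.2 then zt a p.1 * zt b p.2 else 0)
          + ∑' p : ℕ × ℕ, (if p.1 = p.2 then zt a p.1 * zt b p.2 else 0) := by
        rw [Summable.tsum_add ((summable_dbl ha hb).add (summable_ite (summable_pair ha hb) _))
          (summable_ite (summable_pair ha hb) _),
          Summable.tsum_add (summable_dbl ha hb) (summable_ite (summable_pair ha hb) _)]
    _ = (∑' p, dbl a b p) + (∑' p, dbl b a p) + ∑' m, zt (a + b) m := by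
        rw [tsum_diag]
        congr 1
        congr 1
        rw [← (Equiv.prodComm ℕ ℕ).tsum_eq]
        refine tsum_congr fun p => ?_
        simp [dbl, mul_comm]; rfl

def swE : ℕ × ℕ × ℕ ≃ ℕ × ℕ × ℕ :=
  ⟨fun t => (t.2.1, t.1, t.2.2), fun t => (t.2.1, t.1, t.2.2), fun _ => rfl, fun _ => rfl⟩
def rotE : ℕ × ℕ × ℕ ≃ ℕ × ℕ × ℕ :=
  ⟨fun t => (t.2.2, t.1, t.2.1), fun t => (t.2.1, t.2.2, t.1), fun _ => rfl, fun _ => rfl⟩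

noncomputable def V (a b c : ℕ) (t : ℕ × ℕ × ℕ) : ℝ := zt a t.1 * zt b t.2.1 * zt c t.2.2
noncomputable def P2 (a b c : ℕ) (t : ℕ × ℕ × ℕ) : ℝ :=
  if t.2.2 < t.2.1 ∧ t.1 = t.2.1 then V a b c t else 0
noncomputable def P3 (a b c : ℕ) (t : ℕ × ℕ × ℕ) : ℝ :=
  if t.2.2 < t.1 ∧ t.1 < t.2.1 then V a b c t else 0
noncomputable def P4 (a b c : ℕ) (t : ℕ × ℕ × ℕ) : ℝ :=
  if t.1 = t.2.2 ∧ t.2.2 < t.2.1 then V a b c t else 0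
noncomputable def P5 (a b c : ℕ) (t : ℕ × ℕ × ℕ) : ℝ :=
  if t.1 < t.2.2 ∧ t.2.2 < t.2.1 then V a b c t else 0

lemma stuffle12 {a b c : ℕ} (ha : 2 ≤ a) (hb : 2 ≤ b) (hc : 2 ≤ c) :
    (∑' m, zt a m) * (∑' p, dbl b c p) =
      (∑' t, trp a b c t) + (∑' t, trp b a c t) + (∑' t, trp b c a t)
        + (∑' p, dbl (a + b) c p) + ∑' p, dbl b (a + c) p := by
  have hsum : ∀ (C : ℕ × ℕ × ℕ → Prop) [DecidablePred C],
      Summable (fun t => if C t then V a b c t else 0) := by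
    intro C _
    exact summable_ite (summable_triple ha hb hc) C
  have step1 : (∑' m, zt a m) * (∑' p, dbl b c p)
      = ∑' t : ℕ × (ℕ × ℕ), zt a t.1 * dbl b c t.2 := by
    refine tsum_mul_tsum_of_summable_norm ?_ ?_
    · rw [summable_norm_iff]; exact summable_zt ha
    · rw [summable_norm_iff]; exact summable_dbl hb hc
  rw [step1]
  have step2 : ∀ t : ℕ × ℕ × ℕ, zt a t.1 * dbl b c t.2 =
      trp a b c t + P2 a b c t + P3 a b c t + P4 a b c t + P5 a b c t := by
    rintro ⟨m, p, q⟩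
    simp only [dbl, trp, P2, P3, P4, P5, V, mul_ite, mul_zero, ← mul_assoc]
    by_cases h : q < p
    · rcases lt_trichotomy m p with h1 | h1 | h1
      · rcases lt_trichotomy m q with h2 | h2 | h2
        · rw [if_pos h, if_neg (by omega), if_neg (by omega), if_neg (by omega),
            if_neg (by omega), if_pos (by omega)]; ring
        · rw [if_pos h, if_neg (by omega), if_neg (by omega), if_neg (by omega),
            if_pos (by omega), if_neg (by omega)]; ring
        · rw [if_pos h, if_neg (by omega), if_neg (by omega), if_pos (by omega),
            if_neg (by omega), if_neg (by omega)]; ring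
      · rw [if_pos h, if_neg (by omega), if_pos (by omega), if_neg (by omega),
          if_neg (by omega), if_neg (by omega)]; ring
      · rw [if_pos h, if_pos (by omega), if_neg (by omega), if_neg (by omega),
          if_neg (by omega), if_neg (by omega)]; ring
    · rw [if_neg h, if_neg (by omega), if_neg (by omega), if_neg (by omega),
        if_neg (by omega), if_neg (by omega)]; ring
  rw [tsum_congr step2]
  have h1 : Summable (trp a b c) := hsum _
  have h2 : Summable (P2 a b c) := hsum _
  have h3 : Summable (P3 a b c) := hsum _
  have h4 : Summable (P4 a b c) := hsum _
  have h5 : Summable (P5 a b c) := hsum _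
  rw [Summable.tsum_add (((h1.add h2).add h3).add h4) h5,
    Summable.tsum_add ((h1.add h2).add h3) h4, Summable.tsum_add (h1.add h2) h3, Summable.tsum_add h1 h2]
  have e2 : (∑' t, P2 a b c t) = ∑' p, dbl (a + b) c p := by
    rw [← Function.Injective.tsum_eq (g := fun p : ℕ × ℕ => (p.1, p.1, p.2))
      (fun x y h => by
        simp only [Prod.mk.injEq] at h
        exact Prod.ext h.1 h.2.2) ?_]
    · refine tsum_congr fun p => ?_
      simp only [P2, V, dbl]
      by_cases h : p.2 < p.1
      · rw [if_pos (by simp [h]), if_pos h, ← zt_mul]; try ring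
      · rw [if_neg (by tauto), if_neg h]
    · rintro ⟨m, p, q⟩ hp
      simp only [Function.mem_support, P2] at hp
      have : m = p := by by_contra hne; exact hp (if_neg (by tauto))
      exact ⟨(m, q), by simp [this]⟩
  have e3 : (∑' t, P3 a b c t) = ∑' t, trp b a c t := by
    rw [← swE.tsum_eq (P3 a b c)]
    refine tsum_congr fun t => ?_
    rcases t with ⟨x, y, z⟩
    simp only [swE, Equiv.coe_fn_mk, P3, V, trp]
    by_cases h : z < y ∧ y < x
    · rw [if_pos h]; exact (if_pos h).trans (by ring)
    · rw [if_neg h]; exact if_neg h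
  have e4 : (∑' t, P4 a b c t) = ∑' p, dbl b (a + c) p := by
    rw [← Function.Injective.tsum_eq (g := fun p : ℕ × ℕ => (p.2, p.1, p.2))
      (fun x y h => by
        simp only [Prod.mk.injEq] at h
        exact Prod.ext h.2.1 h.1) ?_]
    · refine tsum_congr fun p => ?_
      simp only [P4, V, dbl]
      by_cases h : p.2 < p.1
      · rw [if_pos (by simp [h]), if_pos h, ← zt_mul]; try ring
      · rw [if_neg (by tauto), if_neg h]
    · rintro ⟨m, p, q⟩ hp
      simp only [Function.mem_support, P4] at hp
      have : m = q := by by_contra hne; exact hp (if_neg (by tauto))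
      exact ⟨(p, q), by simp [this]⟩
  have e5 : (∑' t, P5 a b c t) = ∑' t, trp b c a t := by
    rw [← rotE.tsum_eq (P5 a b c)]
    refine tsum_congr fun t => ?_
    rcases t with ⟨x, y, z⟩
    simp only [rotE, Equiv.coe_fn_mk, P5, V, trp]
    by_cases h : z < y ∧ y < x
    · rw [if_pos h]; exact (if_pos h).trans (by ring)
    · rw [if_neg h]; exact if_neg h
  rw [e2, e3, e4, e5]
  ring

/-- Hoffman's symmetric-sum identity in depth 3. -/
lemma hoffman3 {a b c : ℕ} (ha : 2 ≤ a) (hb : 2 ≤ b) (hc : 2 ≤ c) :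
    mzv ![a, b, c] + mzv ![a, c, b] + mzv ![b, a, c] + mzv ![b, c, a]
      + mzv ![c, a, b] + mzv ![c, b, a]
    = mzv ![a] * mzv ![b] * mzv ![c] - mzv ![a + b] * mzv ![c] - mzv ![a + c] * mzv ![b]
      - mzv ![b + c] * mzv ![a] + 2 * mzv ![a + b + c] := by
  have ha1 : 1 ≤ a := by omega
  have hb1 : 1 ≤ b := by omega
  have hc1 : 1 ≤ c := by omega
  rw [mzv_three ha1 hb1 hc1, mzv_three ha1 hc1 hb1, mzv_three hb1 ha1 hc1,
    mzv_three hb1 hc1 ha1, mzv_three hc1 ha1 hb1, mzv_three hc1 hb1 ha1,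
    mzv_one ha1, mzv_one hb1, mzv_one hc1, mzv_one (by omega : 1 ≤ a + b),
    mzv_one (by omega : 1 ≤ a + c), mzv_one (by omega : 1 ≤ b + c),
    mzv_one (by omega : 1 ≤ a + b + c)]
  have s12abc := stuffle12 ha hb hc
  have s12acb := stuffle12 ha hc hb
  have s11bc := stuffle11 hb hc
  have s11ab_c := stuffle11 (show 2 ≤ a + b by omega) hc
  have s11ac_b := stuffle11 (show 2 ≤ a + c by omega) hb
  rw [show a + c + b = a + b + c by omega] at s11ac_b
  linear_combination (-1 : ℝ) * s12abc - s12acb - (∑' m, zt a m) * s11bc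
    + s11ab_c + s11ac_b

noncomputable def permE : Equiv.Perm (Fin 4) ≃ Fin 4 × Fin 3 × Fin 2 × Equiv.Perm (Fin 1) :=
  Equiv.Perm.decomposeFin.trans <|
    (Equiv.refl (Fin 4)).prodCongr <| Equiv.Perm.decomposeFin.trans <|
      (Equiv.refl (Fin 3)).prodCongr Equiv.Perm.decomposeFin

lemma perm24 (G : Fin 4 → Fin 4 → Fin 4 → Fin 4 → ℝ) :
    ∑ σ : Equiv.Perm (Fin 4), G (σ 0) (σ 1) (σ 2) (σ 3) =
      G 0 1 2 3 + G 0 1 3 2 + G 0 2 1 3 + G 0 2 3 1 + G 0 3 1 2 + G 0 3 2 1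
    + G 1 0 2 3 + G 1 0 3 2 + G 1 2 0 3 + G 1 2 3 0 + G 1 3 0 2 + G 1 3 2 0
    + G 2 0 1 3 + G 2 0 3 1 + G 2 1 0 3 + G 2 1 3 0 + G 2 3 0 1 + G 2 3 1 0
    + G 3 0 1 2 + G 3 0 2 1 + G 3 1 0 2 + G 3 1 2 0 + G 3 2 0 1 + G 3 2 1 0 := by
  rw [← Equiv.sum_comp permE.symm (fun σ => G (σ 0) (σ 1) (σ 2) (σ 3))]
  simp only [Fintype.sum_prod_type]
  simp only [Fintype.sum_subsingleton (ι := Equiv.Perm (Fin 1)) _ 1]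
  simp only [Fin.sum_univ_four, Fin.sum_univ_three, Fin.sum_univ_two]
  have hE : ∀ p q r, permE.symm (p, q, r, 1) =
      Equiv.Perm.decomposeFin.symm
        (p, Equiv.Perm.decomposeFin.symm (q, Equiv.Perm.decomposeFin.symm (r, 1))) := by
    intro p q r; rfl
  have s41 : (1 : Fin 4) = (0 : Fin 3).succ := rfl
  have s42 : (2 : Fin 4) = (1 : Fin 3).succ := rfl
  have s43 : (3 : Fin 4) = (2 : Fin 3).succ := rfl
  have s31 : (1 : Fin 3) = (0 : Fin 2).succ := rfl
  have s32 : (2 : Fin 3) = (1 : Fin 2).succ := rfl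
  have s21 : (1 : Fin 2) = (0 : Fin 1).succ := rfl
  simp only [hE, s43, s42, s41, Equiv.Perm.decomposeFin_symm_apply_zero,
    Equiv.Perm.decomposeFin_symm_apply_succ, s32, s31, s21, Equiv.Perm.one_apply]
  simp (config := { decide := true }) only [Equiv.swap_apply_def]
  have c1 : Fin.succ (0 : Fin 3) = (1 : Fin 4) := by decide
  have c2 : Fin.succ (1 : Fin 3) = (2 : Fin 4) := by decide
  have c3 : Fin.succ (2 : Fin 3) = (3 : Fin 4) := by decide
  have d1 : Fin.succ (0 : Fin 2) = (1 : Fin 3) := by decide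
  have d2 : Fin.succ (1 : Fin 2) = (2 : Fin 3) := by decide
  have f1 : Fin.succ (0 : Fin 1) = (1 : Fin 2) := by decide
  simp only [if_true, if_false, ite_true, ite_false, c1, c2, c3, d1, d2, f1]
  ring

theorem symmetric_sum_depth_three_times_depth_one (l1 l2 l3 l4 : ℕ)
    (h1 : 2 ≤ l1) (h2 : 2 ≤ l2) (h3 : 2 ≤ l3) (h4 : 2 ≤ l4) :
    (∑ σ : Equiv.Perm (Fin 4),
        mzv ![![l1, l2, l3, l4] (σ 0), ![l1, l2, l3, l4] (σ 1),
              ![l1, l2, l3, l4] (σ 2)]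
          * mzv ![![l1, l2, l3, l4] (σ 3)]) =
      4 * (mzv ![l1] * mzv ![l2] * mzv ![l3] * mzv ![l4])
        - 2 * (mzv ![l1 + l2] * mzv ![l3] * mzv ![l4]
            + mzv ![l1 + l3] * mzv ![l2] * mzv ![l4]
            + mzv ![l1 + l4] * mzv ![l2] * mzv ![l3]
            + mzv ![l2 + l3] * mzv ![l1] * mzv ![l4]
            + mzv ![l2 + l4] * mzv ![l1] * mzv ![l3]
            + mzv ![l3 + l4] * mzv ![l1] * mzv ![l2])
        + 2 * (mzv ![l1 + l2 + l3] * mzv ![l4] + mzv ![l1 + l2 + l4] * mzv ![l3]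
            + mzv ![l1 + l3 + l4] * mzv ![l2] + mzv ![l2 + l3 + l4] * mzv ![l1]) := by
  rw [perm24 (fun i j k m => mzv ![![l1, l2, l3, l4] i, ![l1, l2, l3, l4] j,
    ![l1, l2, l3, l4] k] * mzv ![![l1, l2, l3, l4] m])]
  simp only [Matrix.cons_val_zero, Matrix.cons_val_one, Matrix.head_cons,
    Matrix.cons_val_two, Matrix.tail_cons, Matrix.cons_val_three]
  have hA := hoffman3 h1 h2 h3
  have hB := hoffman3 h1 h2 h4
  have hC := hoffman3 h1 h3 h4
  have hD := hoffman3 h2 h3 h4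
  linear_combination mzv ![l4] * hA + mzv ![l3] * hB + mzv ![l2] * hC + mzv ![l1] * hD
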